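/- Let (Ω, ℱ, P) be a probability space, let f : ℝ^d → ℝ be differentiable and L-smooth with L > 0, and suppose f satisfies the PL condition with parameter μ > 0 and value f*, i.e. ‖∇f(x)‖² ≥ 2μ(f(x) − f*) ≥ 0 for all x ∈ ℝ^d. Let p ∈ (0, 1], b > 0, b' > 0, σ ≥ 0, and let η > 0 satisfy μη ≤ p/2 and 1/(2η) − L/2 − ((1 − p) η L²)/(p b') ≥ 0. Let x⁰ ∈ ℝ^d and let x_t, g_t : Ω → ℝ^d (t = 0, 1, 2, …) be measurable with x_0 = x⁰, E‖g_0 − ∇f(x⁰)‖² ≤ σ²/b, x_{t+1} = x_t − η g_t almost surely, and suppose f ∘ x_t, ‖g_t − ∇f(x_t)‖² and ‖x_{t+1} − x_t‖² are integrable for every t. Assume that for every t ≥ 0 the estimator recursion E‖g_{t+1} − ∇f(x_{t+1})‖² ≤ p σ²/b + ((1 − p) L²/b') · E‖x_{t+1} − x_t‖² + (1 − p) · E‖g_t − ∇f(x_t)‖² holds. Then for every integer T ≥ 0, E[f(x_T)] − f* ≤ (1 − μη)^T ((f(x⁰) − f*) + η σ²/(p b)) + σ²/(b μ). -/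

import Mathlib

open MeasureTheory
open scoped BigOperators RealInnerProductSpace

lemma descent_lemma {d : ℕ} (f : EuclideanSpace ℝ (Fin d) → ℝ) (L : ℝ) (hL : 0 ≤ L)
    (hf : Differentiable ℝ f)
    (hsmooth : ∀ x y, ‖gradient f x - gradient f y‖ ≤ L * ‖x - y‖)
    (x y : EuclideanSpace ℝ (Fin d)) :
    f y ≤ f x + ⟪gradient f x, y - x⟫ + L / 2 * ‖y - x‖ ^ 2 := by
  set v := y - x with hv
  have hgc : Continuous (gradient f) := by
    have hlip : LipschitzWith (Real.toNNReal L) (gradient f) := by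
      apply LipschitzWith.of_dist_le_mul
      intro a b
      rw [dist_eq_norm, dist_eq_norm]
      simpa [Real.coe_toNNReal L hL] using hsmooth a b
    exact hlip.continuous
  have hderiv : ∀ t : ℝ, HasDerivAt (fun s : ℝ => f (x + s • v))
      ⟪gradient f (x + t • v), v⟫ t := by
    intro t
    have hc : HasDerivAt (fun s : ℝ => x + s • v) v t := by
      simpa using ((hasDerivAt_id t).smul_const v).const_add x
    have hg : HasGradientAt f (gradient f (x + t • v)) (x + t • v) :=
      (hf _).hasGradientAt
    have := hg.hasFDerivAt.comp_hasDerivAt t hc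
    simpa [InnerProductSpace.toDual_apply_apply, Function.comp_def] using this
  have hcont : Continuous fun t : ℝ => ⟪gradient f (x + t • v), v⟫ := by
    apply Continuous.inner
    · exact hgc.comp (by continuity)
    · exact continuous_const
  have hint : IntervalIntegrable (fun t => ⟪gradient f (x + t • v), v⟫)
      MeasureTheory.volume 0 1 := hcont.intervalIntegrable _ _
  have heq : ∫ t in (0:ℝ)..1, ⟪gradient f (x + t • v), v⟫ = f y - f x := by
    have := intervalIntegral.integral_eq_sub_of_hasDerivAt (fun t _ => hderiv t) hint
    simpa [hv] using this
  have hbound : ∀ t ∈ Set.Icc (0:ℝ) 1,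
      ⟪gradient f (x + t • v), v⟫ ≤ ⟪gradient f x, v⟫ + (L * ‖v‖ ^ 2) * t := by
    intro t ht
    have h1 : ⟪gradient f (x + t • v) - gradient f x, v⟫
        ≤ ‖gradient f (x + t • v) - gradient f x‖ * ‖v‖ := real_inner_le_norm _ _
    have h2 : ‖gradient f (x + t • v) - gradient f x‖ ≤ L * (t * ‖v‖) := by
      have := hsmooth (x + t • v) x
      simpa [norm_smul, abs_of_nonneg ht.1] using this
    have h3 : ⟪gradient f (x + t • v), v⟫
        = ⟪gradient f x, v⟫ + ⟪gradient f (x + t • v) - gradient f x, v⟫ := by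
      rw [inner_sub_left]; ring
    nlinarith [norm_nonneg v, mul_le_mul_of_nonneg_right h2 (norm_nonneg v)]
  have hmono := intervalIntegral.integral_mono_on (by norm_num : (0:ℝ) ≤ 1) hint
    (((continuous_const.add (continuous_const.mul continuous_id)).intervalIntegrable _ _))
    hbound
  have hcalc : ∫ t in (0:ℝ)..1, (⟪gradient f x, v⟫ + (L * ‖v‖ ^ 2) * t)
      = ⟪gradient f x, v⟫ + L / 2 * ‖v‖ ^ 2 := by
    rw [intervalIntegral.integral_add (intervalIntegrable_const)
      ((intervalIntegrable_const (c := L * ‖v‖ ^ 2)).mul_continuousOn (by fun_prop)),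
      intervalIntegral.integral_const_mul, integral_id]
    simp; ring
  simp only [Pi.add_apply, Pi.mul_apply, id_eq] at hmono
  rw [heq, hcalc] at hmono
  linarith

lemma seq_bound (L μ fstar p b b' σ η : ℝ) (hμ : 0 < μ) (hp0 : 0 < p) (hp1 : p ≤ 1)
    (hb : 0 < b) (hb' : 0 < b') (hσ : 0 ≤ σ) (hη0 : 0 < η) (hη1 : μ * η ≤ p / 2)
    (hη2 : 1 / (2 * η) - L / 2 - ((1 - p) * η * L ^ 2) / (p * b') ≥ 0)
    (F V D : ℕ → ℝ) (F0 : ℝ)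
    (hF0 : F 0 = F0) (hV0 : V 0 ≤ σ ^ 2 / b)
    (hVnn : ∀ t, 0 ≤ V t) (hDnn : ∀ t, 0 ≤ D t)
    (hdesc : ∀ t, F (t + 1) ≤ (1 - μ * η) * F t + μ * η * fstar + (η / 2) * V t
      + (L / 2 - 1 / (2 * η)) * D t)
    (hrec : ∀ t, V (t + 1) ≤ p * σ ^ 2 / b + ((1 - p) * L ^ 2 / b') * D t + (1 - p) * V t) :
    ∀ T : ℕ, F T - fstar ≤ (1 - μ * η) ^ T * ((F0 - fstar) + η * σ ^ 2 / (p * b))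
      + σ ^ 2 / (b * μ) := by
  have ha0 : 0 ≤ 1 - μ * η := by nlinarith
  have hstep : ∀ t, F (t + 1) - fstar + (η / p) * V (t + 1)
      ≤ (1 - μ * η) * (F t - fstar + (η / p) * V t) + η * σ ^ 2 / b := by
    intro t
    have h1 := hdesc t
    have h2 := mul_le_mul_of_nonneg_left (hrec t) (le_of_lt (div_pos hη0 hp0))
    have hVcoef : (η / 2 + (η / p) * (1 - p)) - (1 - μ * η) * (η / p)
        = -((η * (p / 2 - μ * η)) / p) := by field_simp; ring
    have hVc : η / 2 + (η / p) * (1 - p) ≤ (1 - μ * η) * (η / p) := by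
      have hnum : 0 ≤ η * (p / 2 - μ * η) := by nlinarith
      have := div_nonneg hnum hp0.le
      linarith
    have m1 := mul_le_mul_of_nonneg_right hVc (hVnn t)
    have hDcoefeq : (L / 2 - 1 / (2 * η)) + (η / p) * ((1 - p) * L ^ 2 / b')
        = -(1 / (2 * η) - L / 2 - ((1 - p) * η * L ^ 2) / (p * b')) := by
      field_simp; ring
    have hDc : (L / 2 - 1 / (2 * η)) + (η / p) * ((1 - p) * L ^ 2 / b') ≤ 0 := by
      rw [hDcoefeq]; linarith
    have m2 : ((L / 2 - 1 / (2 * η)) + (η / p) * ((1 - p) * L ^ 2 / b')) * D t ≤ 0 :=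
      mul_nonpos_of_nonpos_of_nonneg hDc (hDnn t)
    have e1 : (η / p) * (p * σ ^ 2 / b) = η * σ ^ 2 / b := by field_simp
    nlinarith [m1, m2, h1, h2]
  have hS : 0 ≤ σ ^ 2 / (b * μ) := by positivity
  have main : ∀ T : ℕ, F T - fstar + (η / p) * V T
      ≤ (1 - μ * η) ^ T * ((F0 - fstar) + η * σ ^ 2 / (p * b)) + σ ^ 2 / (b * μ) := by
    intro T
    induction T with
    | zero =>
      have e0 : (η / p) * (σ ^ 2 / b) = η * σ ^ 2 / (p * b) := by field_simp
      have := mul_le_mul_of_nonneg_left hV0 (le_of_lt (div_pos hη0 hp0))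
      simp only [pow_zero, one_mul, hF0]
      linarith
    | succ T ih =>
      have h1 := hstep T
      have h2 := mul_le_mul_of_nonneg_left ih ha0
      have e2 : (1 - μ * η) * (σ ^ 2 / (b * μ)) + η * σ ^ 2 / b = σ ^ 2 / (b * μ) := by
        field_simp; ring
      rw [pow_succ]
      linarith [h1, h2, e2]
  intro T
  have := main T
  have hVp : 0 ≤ (η / p) * V T :=
    mul_nonneg (le_of_lt (div_pos hη0 hp0)) (hVnn T)
  linarith

open MeasureTheory
open scoped BigOperators RealInnerProductSpace

theorem stmt_14 {Ω : Type*} [MeasurableSpace Ω] (P : Measure Ω) [IsProbabilityMeasure P]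
    (d : ℕ) (f : EuclideanSpace ℝ (Fin d) → ℝ) (L : ℝ) (hL : 0 < L)
    (hf : Differentiable ℝ f)
    (hsmooth : ∀ x y : EuclideanSpace ℝ (Fin d),
      ‖gradient f x - gradient f y‖ ≤ L * ‖x - y‖)
    (μ fstar : ℝ) (hμ : 0 < μ)
    (hpl : ∀ x : EuclideanSpace ℝ (Fin d), ‖gradient f x‖ ^ 2 ≥ 2 * μ * (f x - fstar))
    (hpl0 : ∀ x : EuclideanSpace ℝ (Fin d), 2 * μ * (f x - fstar) ≥ 0)
    (p : ℝ) (hp0 : 0 < p) (hp1 : p ≤ 1) (b b' : ℝ) (hb : 0 < b) (hb' : 0 < b')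
    (σ : ℝ) (hσ : 0 ≤ σ)
    (η : ℝ) (hη0 : 0 < η) (hη1 : μ * η ≤ p / 2)
    (hη2 : 1 / (2 * η) - L / 2 - ((1 - p) * η * L ^ 2) / (p * b') ≥ 0)
    (x0 : EuclideanSpace ℝ (Fin d))
    (x g : ℕ → Ω → EuclideanSpace ℝ (Fin d))
    (hxm : ∀ t, Measurable (x t)) (hgm : ∀ t, Measurable (g t))
    (hx0 : ∀ᵐ ω ∂P, x 0 ω = x0)
    (hg0 : ∫ ω, ‖g 0 ω - gradient f x0‖ ^ 2 ∂P ≤ σ ^ 2 / b)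
    (hupd : ∀ t, ∀ᵐ ω ∂P, x (t + 1) ω = x t ω - η • g t ω)
    (hint1 : ∀ t, Integrable (fun ω => f (x t ω)) P)
    (hint3 : ∀ t, Integrable (fun ω => ‖g t ω - gradient f (x t ω)‖ ^ 2) P)
    (hint4 : ∀ t, Integrable (fun ω => ‖x (t + 1) ω - x t ω‖ ^ 2) P)
    (hrec : ∀ t, ∫ ω, ‖g (t + 1) ω - gradient f (x (t + 1) ω)‖ ^ 2 ∂P
        ≤ p * σ ^ 2 / b + ((1 - p) * L ^ 2 / b') * ∫ ω, ‖x (t + 1) ω - x t ω‖ ^ 2 ∂P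
          + (1 - p) * ∫ ω, ‖g t ω - gradient f (x t ω)‖ ^ 2 ∂P) :
    ∀ T : ℕ, (∫ ω, f (x T ω) ∂P) - fstar
      ≤ (1 - μ * η) ^ T * ((f x0 - fstar) + η * σ ^ 2 / (p * b)) + σ ^ 2 / (b * μ) := by
  have hF0 : (fun t => ∫ ω, f (x t ω) ∂P) 0 = f x0 := by
    have : ∫ ω, f (x 0 ω) ∂P = ∫ _ω, f x0 ∂P := by
      apply integral_congr_ae
      filter_upwards [hx0] with ω hω
      rw [hω]
    simp only [this, integral_const, measure_univ, ENNReal.toReal_one, probReal_univ, one_smul]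
  have hV0 : (fun t => ∫ ω, ‖g t ω - gradient f (x t ω)‖ ^ 2 ∂P) 0 ≤ σ ^ 2 / b := by
    have : ∫ ω, ‖g 0 ω - gradient f (x 0 ω)‖ ^ 2 ∂P
        = ∫ ω, ‖g 0 ω - gradient f x0‖ ^ 2 ∂P := by
      apply integral_congr_ae
      filter_upwards [hx0] with ω hω
      rw [hω]
    simpa only [this] using hg0
  have hVnn : ∀ t, 0 ≤ ∫ ω, ‖g t ω - gradient f (x t ω)‖ ^ 2 ∂P := by
    intro t; exact integral_nonneg fun ω => by positivity
  have hDnn : ∀ t, 0 ≤ ∫ ω, ‖x (t + 1) ω - x t ω‖ ^ 2 ∂P := by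
    intro t; exact integral_nonneg fun ω => by positivity
  have hdesc : ∀ t, ∫ ω, f (x (t + 1) ω) ∂P
      ≤ (1 - μ * η) * (∫ ω, f (x t ω) ∂P) + μ * η * fstar
        + (η / 2) * (∫ ω, ‖g t ω - gradient f (x t ω)‖ ^ 2 ∂P)
        + (L / 2 - 1 / (2 * η)) * (∫ ω, ‖x (t + 1) ω - x t ω‖ ^ 2 ∂P) := by
    intro t
    have key : ∀ᵐ ω ∂P, f (x (t + 1) ω)
        ≤ (1 - μ * η) * f (x t ω) + μ * η * fstar
          + (η / 2) * ‖g t ω - gradient f (x t ω)‖ ^ 2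
          + (L / 2 - 1 / (2 * η)) * ‖x (t + 1) ω - x t ω‖ ^ 2 := by
      filter_upwards [hupd t] with ω hω
      have hd := descent_lemma f L hL.le hf hsmooth (x t ω) (x (t + 1) ω)
      have hveq : x (t + 1) ω - x t ω = -(η • g t ω) := by rw [hω]; abel
      have hnv : ‖x (t + 1) ω - x t ω‖ ^ 2 = η ^ 2 * ‖g t ω‖ ^ 2 := by
        rw [hveq, norm_neg, norm_smul, Real.norm_eq_abs, abs_of_pos hη0, mul_pow]
      have hinner : ⟪gradient f (x t ω), x (t + 1) ω - x t ω⟫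
          = -(η * ⟪gradient f (x t ω), g t ω⟫) := by
        rw [hveq, inner_neg_right, real_inner_smul_right]
      have hexp : ‖g t ω - gradient f (x t ω)‖ ^ 2
          = ‖g t ω‖ ^ 2 - 2 * ⟪gradient f (x t ω), g t ω⟫ + ‖gradient f (x t ω)‖ ^ 2 := by
        rw [norm_sub_sq_real, real_inner_comm]
      have hplmul : μ * η * (f (x t ω) - fstar)
          ≤ η / 2 * ‖gradient f (x t ω)‖ ^ 2 := by
        have h := (hpl (x t ω)).le
        nlinarith [h, hη0.le]
      have hc : (L / 2 - 1 / (2 * η)) * (η ^ 2 * ‖g t ω‖ ^ 2)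
          = L / 2 * (η ^ 2 * ‖g t ω‖ ^ 2) - η / 2 * ‖g t ω‖ ^ 2 := by
        field_simp
      rw [hnv, hinner] at hd
      rw [hnv]
      have hexp2 : η / 2 * ‖g t ω - gradient f (x t ω)‖ ^ 2
          = η / 2 * ‖g t ω‖ ^ 2 - η * ⟪gradient f (x t ω), g t ω⟫
            + η / 2 * ‖gradient f (x t ω)‖ ^ 2 := by rw [hexp]; ring
      linarith [hd, hplmul, hc, hexp2]
    have i1 : Integrable (fun ω => (1 - μ * η) * f (x t ω)) P := (hint1 t).const_mul _
    have i2 : Integrable (fun _ω : Ω => μ * η * fstar) P := integrable_const _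
    have i3 : Integrable (fun ω => (η / 2) * ‖g t ω - gradient f (x t ω)‖ ^ 2) P :=
      (hint3 t).const_mul _
    have i4 : Integrable
        (fun ω => (L / 2 - 1 / (2 * η)) * ‖x (t + 1) ω - x t ω‖ ^ 2) P :=
      (hint4 t).const_mul _
    have I12 : Integrable (fun ω => (1 - μ * η) * f (x t ω) + μ * η * fstar) P := by
      exact i1.add i2
    have I123 : Integrable (fun ω => (1 - μ * η) * f (x t ω) + μ * η * fstar
        + (η / 2) * ‖g t ω - gradient f (x t ω)‖ ^ 2) P := by
      exact I12.add i3
    have I1234 : Integrable (fun ω => (1 - μ * η) * f (x t ω) + μ * η * fstar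
        + (η / 2) * ‖g t ω - gradient f (x t ω)‖ ^ 2
        + (L / 2 - 1 / (2 * η)) * ‖x (t + 1) ω - x t ω‖ ^ 2) P := by
      exact I123.add i4
    have hmono := integral_mono_ae (hint1 (t + 1)) I1234 key
    calc ∫ ω, f (x (t + 1) ω) ∂P
        ≤ ∫ ω, ((1 - μ * η) * f (x t ω) + μ * η * fstar
            + (η / 2) * ‖g t ω - gradient f (x t ω)‖ ^ 2
            + (L / 2 - 1 / (2 * η)) * ‖x (t + 1) ω - x t ω‖ ^ 2) ∂P := hmono
      _ = (1 - μ * η) * (∫ ω, f (x t ω) ∂P) + μ * η * fstar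
            + (η / 2) * (∫ ω, ‖g t ω - gradient f (x t ω)‖ ^ 2 ∂P)
            + (L / 2 - 1 / (2 * η)) * (∫ ω, ‖x (t + 1) ω - x t ω‖ ^ 2 ∂P) := by
          rw [integral_add I123 i4, integral_add I12 i3,
            integral_add i1 i2, integral_const_mul, integral_const_mul,
            integral_const_mul, integral_const]
          simp [measure_univ, integral_const_mul]
  have := seq_bound L μ fstar p b b' σ η hμ hp0 hp1 hb hb' hσ hη0 hη1 hη2
    (fun t => ∫ ω, f (x t ω) ∂P)
    (fun t => ∫ ω, ‖g t ω - gradient f (x t ω)‖ ^ 2 ∂P)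
    (fun t => ∫ ω, ‖x (t + 1) ω - x t ω‖ ^ 2 ∂P)
    (f x0) hF0 hV0 hVnn hDnn hdesc hrec
  exact this
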